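/- (Naiman's lemma) Let A be a bounded operator on the complex Hilbert space ℓ²(ℤ) of finite width, that is, there exists w such that the matrix entries satisfy A_{kℓ} = 0 whenever |k − ℓ| > w. If A commutes with S^p + S^{−p} for some p ≥ 1, then A commutes with S^p. -/

import Mathlib

open scoped ComplexConjugate

noncomputable section

/-- The two-sided Hilbert space `ℓ²(ℤ)`. -/
abbrev HZ : Type := lp (fun _ : ℤ => ℂ) 2

/-- The standard orthonormal basis vectors of `ℓ²(ℤ)`. -/
def deltaZ (k : ℤ) : HZ := lp.single 2 k 1

/-- The matrix entries `A_{kℓ} = ⟨δ_k, A δ_ℓ⟩` of a bounded operator. -/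
def entryZ (A : HZ →L[ℂ] HZ) (k l : ℤ) : ℂ := inner ℂ (deltaZ k) (A (deltaZ l))

lemma deltaZ_apply (k n : ℤ) : (deltaZ k : ∀ _ : ℤ, ℂ) n = if n = k then 1 else 0 := by
  simp [deltaZ, lp.single_apply, Pi.single_apply]

lemma inner_deltaZ (k : ℤ) (v : HZ) : (inner ℂ (deltaZ k) v : ℂ) = v k := by
  rw [deltaZ, lp.inner_single_left]
  simp

lemma entryZ_eq (A : HZ →L[ℂ] HZ) (k l : ℤ) : entryZ A k l = (A (deltaZ l)) k :=
  inner_deltaZ k _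

lemma eq_zero_of_entries (T : HZ →L[ℂ] HZ) (h : ∀ k l, entryZ T k l = 0) : T = 0 := by
  have hdelta : ∀ l, T (deltaZ l) = 0 := by
    intro l
    apply lp.ext
    funext n
    have := h n l
    rw [entryZ_eq] at this
    simpa using this
  ext u
  have hs : HasSum (fun k : ℤ => lp.single 2 k (u k)) u :=
    lp.hasSum_single (by norm_num) u
  have hs2 : HasSum (fun k : ℤ => T (lp.single 2 k (u k))) (T u) := hs.mapL T
  have hz : (fun k : ℤ => T (lp.single 2 k (u k))) = fun _ => 0 := by
    funext k
    have : lp.single 2 k (u k) = u k • deltaZ k := by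
      rw [deltaZ, ← lp.single_smul]
      norm_num
    rw [this, map_smul, hdelta, smul_zero]
  rw [hz] at hs2
  have := hs2.unique hasSum_zero
  simp [this]

/-- Naiman's lemma: a bounded operator of finite width on `ℓ²(ℤ)`
commuting with `S^p + S^{−p}` commutes with `S^p`. -/
theorem statement6
    (A : HZ →L[ℂ] HZ)
    (hwidth : ∃ w : ℕ, ∀ k l : ℤ, (w : ℤ) < |k - l| → entryZ A k l = 0)
    (S : HZ →L[ℂ] HZ)
    (hS : ∀ (u : HZ) (n : ℤ), (S u) n = u (n - 1))
    (p : ℕ) (hp : 1 ≤ p)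
    (hcomm : A * (S ^ p + (ContinuousLinearMap.adjoint S) ^ p)
      = (S ^ p + (ContinuousLinearMap.adjoint S) ^ p) * A) :
    A * S ^ p = S ^ p * A := by
  obtain ⟨w, hw⟩ := hwidth
  set T := ContinuousLinearMap.adjoint S with hT
  -- delta vector lemmas
  have hSd : ∀ k : ℤ, S (deltaZ k) = deltaZ (k + 1) := by
    intro k
    apply lp.ext
    funext n
    have h1 : (S (deltaZ k)) n = (deltaZ k) (n - 1) := hS _ n
    rw [h1]
    show (deltaZ k : ∀ _ : ℤ, ℂ) (n - 1) = (deltaZ (k + 1) : ∀ _ : ℤ, ℂ) n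
    rw [deltaZ_apply, deltaZ_apply]
    by_cases h : n = k + 1 <;> simp [h] <;> omega
  have hScoord : ∀ (m : ℕ) (v : HZ) (n : ℤ), ((S ^ m) v) n = v (n - m) := by
    intro m
    induction m with
    | zero => intro v n; simp
    | succ m ih =>
      intro v n
      rw [pow_succ, ContinuousLinearMap.mul_apply, ih, hS]
      congr 1
      push_cast
      ring
  have hT1 : ∀ (v : HZ) (n : ℤ), (T v) n = v (n + 1) := by
    intro v n
    have : (inner ℂ (deltaZ n) (T v) : ℂ) = inner ℂ (S (deltaZ n)) v :=
      ContinuousLinearMap.adjoint_inner_right S (deltaZ n) v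
    rw [inner_deltaZ, hSd, inner_deltaZ] at this
    exact this
  have hTcoord : ∀ (m : ℕ) (v : HZ) (n : ℤ), ((T ^ m) v) n = v (n + m) := by
    intro m
    induction m with
    | zero => intro v n; simp
    | succ m ih =>
      intro v n
      rw [pow_succ, ContinuousLinearMap.mul_apply, ih, hT1]
      congr 1
      push_cast
      ring
  have hSpd : ∀ k : ℤ, (S ^ p) (deltaZ k) = deltaZ (k + p) := by
    intro k
    apply lp.ext
    funext n
    show ((S ^ p) (deltaZ k)) n = (deltaZ (k + p) : ∀ _ : ℤ, ℂ) n
    rw [hScoord]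
    show (deltaZ k : ∀ _ : ℤ, ℂ) (n - p) = _
    rw [deltaZ_apply, deltaZ_apply]
    by_cases h : n = k + p <;> simp [h] <;> omega
  have hTpd : ∀ k : ℤ, (T ^ p) (deltaZ k) = deltaZ (k - p) := by
    intro k
    apply lp.ext
    funext n
    show ((T ^ p) (deltaZ k)) n = (deltaZ (k - p) : ∀ _ : ℤ, ℂ) n
    rw [hTcoord]
    show (deltaZ k : ∀ _ : ℤ, ℂ) (n + p) = _
    rw [deltaZ_apply, deltaZ_apply]
    by_cases h : n = k - p <;> simp [h] <;> omega
  set a := entryZ A with ha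
  -- the key entrywise commutation relation
  have key : ∀ k l : ℤ, a k (l + p) + a k (l - p) = a (k - p) l + a (k + p) l := by
    intro k l
    have e := congrArg (fun X : HZ →L[ℂ] HZ => (X (deltaZ l)) k) hcomm
    simp only [ContinuousLinearMap.mul_apply, ContinuousLinearMap.add_apply] at e
    rw [hSpd, hTpd, map_add] at e
    have eL : (A (deltaZ (l + p)) + A (deltaZ (l - p))) k
        = (A (deltaZ (l + p))) k + (A (deltaZ (l - p))) k := by
      simp
    have eR : ((S ^ p) (A (deltaZ l)) + (T ^ p) (A (deltaZ l))) k
        = ((S ^ p) (A (deltaZ l))) k + ((T ^ p) (A (deltaZ l))) k := by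
      simp
    rw [eL, eR, hScoord, hTcoord] at e
    rw [ha]
    rw [entryZ_eq, entryZ_eq, entryZ_eq, entryZ_eq]
    exact e
  -- the commutator entries
  set B : ℤ → ℤ → ℂ := fun k l => a k (l + p) - a (k - p) l with hB
  have hrec : ∀ k l : ℤ, B k l = B (k + p) (l - p) := by
    intro k l
    have h1 : B (k + p) (l - p) = a (k + p) l - a k (l - p) := by
      rw [hB]
      dsimp only
      rw [show l - p + p = l by ring, show k + p - p = k by ring]
    rw [h1, hB]
    dsimp only
    linear_combination key k l
  have hiter : ∀ (k l : ℤ) (n : ℕ), B k l = B (k + n * p) (l - n * p) := by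
    intro k l n
    induction n with
    | zero => simp
    | succ n ih =>
      rw [ih, hrec]
      congr 1
      · push_cast; ring
      · push_cast; ring
  have hBzero : ∀ k l : ℤ, B k l = 0 := by
    intro k l
    set n : ℕ := w + p + (k - l).natAbs + 1 with hn
    have hNcast : ((n : ℤ)) = (w : ℤ) + p + |k - l| + 1 := by
      rw [hn]
      push_cast
      try ring
    have hp' : (1 : ℤ) ≤ (p : ℤ) := by exact_mod_cast hp
    have habs : -(|k - l|) ≤ k - l := neg_abs_le _
    have hwnn : (0 : ℤ) ≤ (w : ℤ) := Int.natCast_nonneg w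
    have hann : (0 : ℤ) ≤ |k - l| := abs_nonneg _
    have hbig : (w : ℤ) < k - l + 2 * n * p - p := by
      nlinarith [mul_nonneg (sub_nonneg.2 hp') (by nlinarith : (0:ℤ) ≤ 2 * (n:ℤ) - 1)]
    rw [hiter k l n, hB]
    dsimp only
    have h1 : a (k + n * p) (l - n * p + p) = 0 := by
      apply hw
      rw [show (k + n * p) - (l - n * p + p) = k - l + 2 * n * p - p by ring]
      exact lt_of_lt_of_le hbig (le_abs_self _)
    have h2 : a (k + n * p - p) (l - n * p) = 0 := by
      apply hw
      rw [show (k + n * p - p) - (l - n * p) = k - l + 2 * n * p - p by ring]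
      exact lt_of_lt_of_le hbig (le_abs_self _)
    rw [h1, h2, sub_zero]
  -- conclude
  have hfin : A * S ^ p - S ^ p * A = 0 := by
    apply eq_zero_of_entries
    intro k l
    have e1 : entryZ (A * S ^ p) k l = a k (l + p) := by
      rw [ha, entryZ, entryZ, ContinuousLinearMap.mul_apply, hSpd]
    have e2 : entryZ (S ^ p * A) k l = a (k - p) l := by
      rw [ha, entryZ_eq, ContinuousLinearMap.mul_apply, hScoord, entryZ_eq]
    have : entryZ (A * S ^ p - S ^ p * A) k l
        = entryZ (A * S ^ p) k l - entryZ (S ^ p * A) k l := by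
      rw [entryZ, entryZ, entryZ, ContinuousLinearMap.sub_apply, inner_sub_right]
    rw [this, e1, e2]
    exact hBzero k l
  exact sub_eq_zero.mp hfin
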